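/- Let P be a polymatroid on [n], and let a, b be distinct bases of P such that there exist indices i, j with a_i < b_i and a_t = b_t for all t ∈ [n]\{i,j\}. Then for any k > max{i,j}, k is externally active with respect to b if and only if k is externally active with respect to a. -/

import Mathlib

open Finset

/-- The `i`-th standard basis vector in `ℤ^n`. -/
def e {n : ℕ} (i : Fin n) : Fin n → ℤ := fun t => if t = i then 1 else 0

/-- Membership characterization of the polymatroid `P_f`. -/
def IsPolymatroid {n : ℕ} (P : Set (Fin n → ℤ)) (f : Finset (Fin n) → ℤ) : Prop :=
  (f ∅ = 0) ∧ (∀ I J : Finset (Fin n), f (I ∪ J) + f (I ∩ J) ≤ f I + f J) ∧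
    (∀ a : Fin n → ℤ, a ∈ P ↔
      (∀ I : Finset (Fin n), ∑ t ∈ I, a t ≤ f I) ∧ ∑ t, a t = f univ)

/-- `i` is internally active w.r.t. the basis `a` of `P` for the order `lt`. -/
def IntActO {n : ℕ} (P : Set (Fin n → ℤ)) (lt : Fin n → Fin n → Prop)
    (a : Fin n → ℤ) (i : Fin n) : Prop :=
  ∀ j : Fin n, lt j i → a - e i + e j ∉ P

/-- `i` is externally active w.r.t. the basis `a` of `P` for the order `lt`. -/
def ExtActO {n : ℕ} (P : Set (Fin n → ℤ)) (lt : Fin n → Fin n → Prop)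
    (a : Fin n → ℤ) (i : Fin n) : Prop :=
  ∀ j : Fin n, lt j i → a + e i - e j ∉ P

/-- Internal activity for the natural order on `Fin n`. -/
def IntAct {n : ℕ} (P : Set (Fin n → ℤ)) (a : Fin n → ℤ) (i : Fin n) : Prop :=
  IntActO P (· < ·) a i

/-- External activity for the natural order on `Fin n`. -/
def ExtAct {n : ℕ} (P : Set (Fin n → ℤ)) (a : Fin n → ℤ) (i : Fin n) : Prop :=
  ExtActO P (· < ·) a i

noncomputable def oi {n : ℕ} (P : Set (Fin n → ℤ)) (a : Fin n → ℤ) : ℕ :=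
  {i : Fin n | IntAct P a i ∧ ¬ ExtAct P a i}.ncard

noncomputable def oe {n : ℕ} (P : Set (Fin n → ℤ)) (a : Fin n → ℤ) : ℕ :=
  {i : Fin n | ExtAct P a i ∧ ¬ IntAct P a i}.ncard

noncomputable def ie {n : ℕ} (P : Set (Fin n → ℤ)) (a : Fin n → ℤ) : ℕ :=
  {i : Fin n | IntAct P a i ∧ ExtAct P a i}.ncard

/-- The polymatroid Tutte polynomial evaluated at `(x, y)`. -/
noncomputable def TP {n : ℕ} (P : Set (Fin n → ℤ)) {R : Type*} [CommRing R]
    (x y : R) : R :=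
  ∑ᶠ a ∈ P, x ^ oi P a * y ^ oe P a * (x + y - 1) ^ ie P a

lemma sum_e {n : ℕ} (I : Finset (Fin n)) (k : Fin n) :
    ∑ t ∈ I, e k t = if k ∈ I then 1 else 0 := by
  simpa [e] using Finset.sum_ite_eq' I k (fun _ => (1:ℤ))

lemma key {n : ℕ} (P : Set (Fin n → ℤ)) (f : Finset (Fin n) → ℤ)
    (hP : IsPolymatroid P f) (a b : Fin n → ℤ) (ha : a ∈ P) (hb : b ∈ P)
    (i j k : Fin n) (hki : i < k) (hkj : j < k)
    (hagree : ∀ t : Fin n, t ≠ i → t ≠ j → a t = b t)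
    (hA : ExtAct P a k) : ExtAct P b k := by
  obtain ⟨hf0, hsub, hmem⟩ := hP
  obtain ⟨haI, hasum⟩ := (hmem a).1 ha
  obtain ⟨hbI, hbsum⟩ := (hmem b).1 hb
  -- For each l < k, a tight set for `a` containing k and missing l
  have hchoice : ∀ l : Fin n, l < k → ∃ I : Finset (Fin n),
      k ∈ I ∧ l ∉ I ∧ ∑ t ∈ I, a t = f I := by
    intro l hl
    by_contra hcon
    push_neg at hcon
    apply hA l hl
    rw [hmem]
    have hsum : ∀ I : Finset (Fin n), ∑ t ∈ I, (a + e k - e l) t =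
        (∑ t ∈ I, a t) + (if k ∈ I then 1 else 0) - (if l ∈ I then 1 else 0) := by
      intro I
      simp [Finset.sum_sub_distrib, Finset.sum_add_distrib, sum_e]
    constructor
    · intro I
      rw [hsum]
      have h2 := haI I
      by_cases hk : k ∈ I
      · by_cases hlI : l ∈ I
        · simp only [hk, hlI, if_true]; omega
        · have h3 := hcon I hk hlI
          have : ∑ t ∈ I, a t ≠ f I := h3
          simp only [hk, hlI, if_true, if_false]; omega
      · simp only [hk, if_false]
        split <;> omega
    · rw [hsum univ]
      simp [hasum]
  choose T hTk hTl hTt using hchoice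
  -- total function version
  set T' : Fin n → Finset (Fin n) := fun l => if h : l < k then T l h else univ with hT'
  set L : Finset (Fin n) := univ.filter (· < k) with hL
  set S : Finset (Fin n) := L.inf T' with hS
  -- S is tight for a
  have tight_pair : ∀ I J : Finset (Fin n), ∑ t ∈ I, a t = f I → ∑ t ∈ J, a t = f J →
      ∑ t ∈ I ∩ J, a t = f (I ∩ J) := by
    intro I J hI hJ
    have h1 := hsub I J
    have h2 := haI (I ∪ J)
    have h3 := haI (I ∩ J)
    have h4 : ∑ x ∈ I ∪ J, a x + ∑ x ∈ I ∩ J, a x = ∑ x ∈ I, a x + ∑ x ∈ J, a x :=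
      Finset.sum_union_inter
    omega
  have tight_inf : ∀ s : Finset (Fin n), (∀ l ∈ s, ∑ t ∈ T' l, a t = f (T' l)) →
      ∑ t ∈ s.inf T', a t = f (s.inf T') := by
    intro s
    induction s using Finset.induction_on with
    | empty => intro _; simpa [Finset.inf_empty, Finset.top_eq_univ] using hasum
    | insert _ _ hx ih =>
      intro hs
      rw [Finset.inf_insert]
      have h1 := hs _ (Finset.mem_insert_self _ _)
      have h2 := ih (fun l hl => hs l (Finset.mem_insert_of_mem hl))
      simpa [Finset.inf_eq_inter] using tight_pair _ _ h1 h2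
  have hStight : ∑ t ∈ S, a t = f S := by
    apply tight_inf
    intro l hl
    simp only [hL, Finset.mem_filter] at hl
    simp only [hT', dif_pos hl.2]
    exact hTt l hl.2
  have hkS : k ∈ S := by
    rw [hS, Finset.mem_inf]
    intro l hl
    simp only [hL, Finset.mem_filter] at hl
    simp only [hT', dif_pos hl.2]
    exact hTk l hl.2
  have hnotS : ∀ l : Fin n, l < k → l ∉ S := by
    intro l hl hlS
    have hlL : l ∈ L := by simp [hL, hl]
    have := Finset.inf_le hlL (f := T')
    have hmem2 : l ∈ T' l := this hlS
    simp only [hT', dif_pos hl] at hmem2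
    exact hTl l hl hmem2
  -- S is tight for b
  have hSb : ∑ t ∈ S, b t = f S := by
    rw [← hStight]
    apply Finset.sum_congr rfl
    intro t ht
    refine (hagree t ?_ ?_).symm
    · rintro rfl; exact hnotS t hki ht
    · rintro rfl; exact hnotS t hkj ht
  -- conclude
  intro l hl hmemP
  obtain ⟨hcI, _⟩ := (hmem _).1 hmemP
  have := hcI S
  have hsum : ∑ t ∈ S, (b + e k - e l) t =
      (∑ t ∈ S, b t) + (if k ∈ S then 1 else 0) - (if l ∈ S then 1 else 0) := by
    simp [Finset.sum_sub_distrib, Finset.sum_add_distrib, sum_e]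
  rw [hsum, if_pos hkS, if_neg (hnotS l hl)] at this
  omega

theorem stmt5 {n : ℕ} (P : Set (Fin n → ℤ)) (f : Finset (Fin n) → ℤ)
    (hP : IsPolymatroid P f) (a b : Fin n → ℤ) (ha : a ∈ P) (hb : b ∈ P)
    (hab : a ≠ b) (i j : Fin n) (hij : a i < b i)
    (hagree : ∀ t : Fin n, t ≠ i → t ≠ j → a t = b t)
    (k : Fin n) (hki : i < k) (hkj : j < k) :
    ExtAct P b k ↔ ExtAct P a k := by
  constructor
  · exact key P f hP b a hb ha i j k hki hkj (fun t h1 h2 => (hagree t h1 h2).symm)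
  · exact key P f hP a b ha hb i j k hki hkj hagree
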